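/- Any two abelian subgroups of S_n of maximal order with n ≡ 0 (mod 3) are conjugate in S_n. -/

import Mathlib

open Equiv Equiv.Perm Finset MulAction
open scoped Classical
open scoped Function

private lemma cube_le_three_pow (m : ℕ) (hm : 1 ≤ m) : m ^ 3 ≤ 3 ^ m := by
  rcases Nat.lt_or_ge m 3 with h | h
  · interval_cases m <;> norm_num
  · induction m, h using Nat.le_induction with
    | base => norm_num
    | succ p hp ih =>
      have h1 : p ^ 3 ≤ 3 ^ p := ih (by omega)
      have h2 : (p + 1) ^ 3 ≤ 3 * p ^ 3 := by
        nlinarith [Nat.mul_le_mul_right (p*p) hp, Nat.mul_le_mul_right p hp]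
      calc (p+1)^3 ≤ 3 * p^3 := h2
        _ ≤ 3 * 3 ^ p := by omega
        _ = 3 ^ (p+1) := by ring

private lemma cube_lt_three_pow (m : ℕ) (hm : 1 ≤ m) (hne : m ≠ 3) : m ^ 3 < 3 ^ m := by
  have : m = 1 ∨ m = 2 ∨ 4 ≤ m := by omega
  rcases this with rfl | rfl | h
  · norm_num
  · norm_num
  · induction m, h using Nat.le_induction with
    | base => norm_num
    | succ p hp ih =>
      have h1 : p ^ 3 < 3 ^ p := ih (by omega) (by omega)
      have h2 : (p + 1) ^ 3 ≤ 3 * p ^ 3 := by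
        nlinarith [Nat.mul_le_mul_right (p*p) (le_trans (by norm_num) hp : 3 ≤ p),
          Nat.mul_le_mul_right p (le_trans (by norm_num) hp : 3 ≤ p)]
      calc (p+1)^3 ≤ 3 * p^3 := h2
        _ < 3 * 3 ^ p := by omega
        _ = 3 ^ (p+1) := by ring

private lemma prod_le_pow {ι : Type*} (s : Finset ι) (m : ι → ℕ) (k : ℕ)
    (h1 : ∀ i ∈ s, 1 ≤ m i) (hsum : ∑ i ∈ s, m i = 3 * k) :
    (∏ i ∈ s, m i ≤ 3 ^ k) ∧ ((∏ i ∈ s, m i = 3 ^ k) → ∀ i ∈ s, m i = 3) := by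
  have hprodpow : ∏ i ∈ s, (3:ℕ) ^ (m i) = 3 ^ (3 * k) := by
    rw [Finset.prod_pow_eq_pow_sum, hsum]
  have key : (∏ i ∈ s, m i) ^ 3 ≤ (3 : ℕ) ^ (3 * k) := by
    rw [← Finset.prod_pow]
    calc ∏ i ∈ s, (m i) ^ 3 ≤ ∏ i ∈ s, 3 ^ (m i) :=
          Finset.prod_le_prod (fun i _ => Nat.zero_le _)
            (fun i hi => cube_le_three_pow _ (h1 i hi))
      _ = 3 ^ (3 * k) := hprodpow
  have h3 : (3:ℕ) ^ (3 * k) = (3 ^ k) ^ 3 := by rw [mul_comm, pow_mul]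
  have hle : ∏ i ∈ s, m i ≤ 3 ^ k := by
    by_contra hlt
    push_neg at hlt
    have h4 : (3 ^ k : ℕ) ^ 3 < (∏ i ∈ s, m i) ^ 3 :=
      Nat.pow_lt_pow_left hlt (by norm_num)
    omega
  refine ⟨hle, fun heq i hi => ?_⟩
  by_contra hne
  have hstrict : ∏ j ∈ s, (m j) ^ 3 < ∏ j ∈ s, (3:ℕ) ^ (m j) := by
    refine Finset.prod_lt_prod (fun j hj => ?_) (fun j hj => cube_le_three_pow _ (h1 j hj))
      ⟨i, hi, cube_lt_three_pow _ (h1 i hi) hne⟩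
    exact pow_pos (h1 j hj) 3
  rw [Finset.prod_pow, heq, hprodpow] at hstrict
  omega

private lemma noncommProd_apply_fix {α ι : Type*} (s : Finset ι)
    (f : ι → Equiv.Perm α) (comm : (s : Set ι).Pairwise (Commute on f)) (x : α)
    (h : ∀ i ∈ s, f i x = x) : s.noncommProd f comm x = x := by
  induction s using Finset.cons_induction with
  | empty => simp
  | cons a s ha ih =>
    rw [Finset.noncommProd_cons, Equiv.Perm.mul_apply,
      ih (comm.mono (by simp)) (fun i hi => h i (Finset.mem_cons_of_mem hi)),
      h a (Finset.mem_cons_self a s)]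

private lemma noncommProd_apply_single {α ι : Type*} (s : Finset ι)
    (f : ι → Equiv.Perm α) (comm : (s : Set ι).Pairwise (Commute on f)) (x : α)
    (i₀ : ι) (hi₀ : i₀ ∈ s)
    (h : ∀ i ∈ s, i ≠ i₀ → f i x = x ∧ f i (f i₀ x) = f i₀ x) :
    s.noncommProd f comm x = f i₀ x := by
  induction s using Finset.cons_induction with
  | empty => simp at hi₀
  | cons a s ha ih =>
    rw [Finset.noncommProd_cons, Equiv.Perm.mul_apply]
    rcases Finset.mem_cons.mp hi₀ with rfl | hi₀s
    · rw [noncommProd_apply_fix s f _ x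
        (fun i hi => (h i (Finset.mem_cons_of_mem hi) (fun he => ha (he ▸ hi))).1)]
    · rw [ih (comm.mono (by simp)) hi₀s
        (fun i hi hne => h i (Finset.mem_cons_of_mem hi) hne),
        (h a (Finset.mem_cons_self a s) (fun he => ha (he ▸ hi₀s))).2]

private lemma pow_apply_inj {α : Type*} (a : Equiv.Perm α) (u : α)
    (h1 : a u ≠ u) (h2 : a (a u) ≠ u) {i j : ℕ} (hi : i < 3) (hj : j < 3)
    (hij : (a ^ i) u = (a ^ j) u) : i = j := by
  interval_cases i <;> interval_cases j <;>
    simp only [pow_zero, pow_one, pow_succ, Equiv.Perm.mul_apply, Equiv.Perm.one_apply,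
      Equiv.Perm.coe_one, id_eq, Equiv.apply_eq_iff_eq] at hij <;>
    first
      | rfl
      | (exact absurd hij h1.symm)
      | (exact absurd hij h2.symm)
      | (exact absurd hij h1)
      | (exact absurd hij h2)

private lemma subgroup_eq_of_le_of_card_le {G : Type*} [Group G] {H K : Subgroup G}
    [Finite K] (hle : H ≤ K) (hcard : Nat.card K ≤ Nat.card H) : H = K := by
  apply SetLike.coe_injective
  refine Set.eq_of_subset_of_ncard_le hle ?_ (Set.toFinite _)
  rwa [← Nat.card_coe_set_eq, ← Nat.card_coe_set_eq]

private lemma fix_orbit {n : ℕ} (G : Subgroup (Equiv.Perm (Fin n)))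
    (hG : ∀ a b : G, a * b = b * a) (g : G) (x y : Fin n)
    (hx : (g : Equiv.Perm (Fin n)) x = x) (hy : y ∈ MulAction.orbit G x) :
    (g : Equiv.Perm (Fin n)) y = y := by
  obtain ⟨h, rfl⟩ := hy
  have h2 : (g : Equiv.Perm (Fin n)) * h = h * g := by exact_mod_cast hG g h
  calc (g : Equiv.Perm (Fin n)) ((h : Equiv.Perm (Fin n)) x)
      = ((g : Equiv.Perm (Fin n)) * h) x := rfl
    _ = ((h : Equiv.Perm (Fin n)) * g) x := by rw [h2]
    _ = (h : Equiv.Perm (Fin n)) x := by rw [Equiv.Perm.mul_apply, hx]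

private def rotHom : Multiplicative (ZMod 3) →* Equiv.Perm (ZMod 3) :=
  MonoidHom.mk' (fun x => Equiv.addLeft x.toAdd) (by
    intro a b
    ext x
    simp [add_assoc])

private lemma rotHom_injective : Function.Injective rotHom := by
  intro a b h
  have := congrArg (fun p => p.toFun 0) h
  simpa [rotHom] using this

private lemma exists_big_abelian (k n : ℕ) (hn : n = 3 * k) :
    ∃ A : Subgroup (Equiv.Perm (Fin n)), (∀ a b : A, a * b = b * a) ∧
      Nat.card A = 3 ^ k := by
  classical
  have hcard : Fintype.card ((_ : Fin k) × ZMod 3) = Fintype.card (Fin n) := by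
    simp [Fintype.card_sigma, hn, mul_comm]
  let e : ((_ : Fin k) × ZMod 3) ≃ Fin n := Fintype.equivOfCardEq hcard
  let pc : Equiv.Perm ((_ : Fin k) × ZMod 3) →* Equiv.Perm (Fin n) :=
    MonoidHom.mk' (fun p => e.permCongr p) (by
      intro a b
      ext x
      simp [Equiv.permCongr_apply])
  have pcinj : Function.Injective pc := fun a b h => (Equiv.permCongr e).injective h
  let f : (Fin k → Multiplicative (ZMod 3)) →* Equiv.Perm (Fin n) :=
    pc.comp ((Equiv.Perm.sigmaCongrRightHom (fun _ : Fin k => ZMod 3)).comp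
      (MonoidHom.compLeft rotHom (Fin k)))
  have hfinj : Function.Injective f := by
    apply pcinj.comp
    apply Equiv.Perm.sigmaCongrRightHom_injective.comp
    intro a b h
    funext i
    exact rotHom_injective (congrFun h i)
  refine ⟨f.range, ?_, ?_⟩
  · rintro ⟨a, ha⟩ ⟨b, hb⟩
    obtain ⟨x, rfl⟩ := ha
    obtain ⟨y, rfl⟩ := hb
    apply Subtype.ext
    push_cast
    rw [← map_mul, ← map_mul, mul_comm]
  · exact (Nat.card_congr (MonoidHom.ofInjective hfinj).toEquiv.symm).trans
      (by rw [Nat.card_pi]; simp)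

private lemma abelian_structure (k n : ℕ) (hn : n = 3 * k)
    (G : Subgroup (Equiv.Perm (Fin n))) (hG : ∀ a b : G, a * b = b * a) :
    Nat.card G ≤ 3 ^ k ∧
      (3 ^ k ≤ Nat.card G → ∃ π : Equiv.Perm (Fin n), π ∈ G ∧
        π.cycleType = Multiset.replicate k 3 ∧
        Subgroup.closure ((π.cycleFactorsFinset : Finset _) :
          Set (Equiv.Perm (Fin n))) = G) := by
  classical
  letI : Fintype (MulAction.orbitRel.Quotient G (Fin n)) := Fintype.ofFinite _
  have hmem : ∀ x : Fin n,
      x ∈ MulAction.orbit G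
        (Quotient.out (Quotient.mk'' x : MulAction.orbitRel.Quotient G (Fin n))) := by
    intro x
    rw [← MulAction.orbitRel.Quotient.orbit_eq_orbit_out _ Quotient.out_eq']
    exact MulAction.orbitRel.Quotient.mem_orbit.mpr rfl
  have hsum : ∑ ω : MulAction.orbitRel.Quotient G (Fin n),
      Nat.card (MulAction.orbit G (Quotient.out ω)) = n := by
    have h := Nat.card_congr (MulAction.selfEquivSigmaOrbits G (Fin n))
    rw [Nat.card_eq_fintype_card, Fintype.card_fin, Nat.card_eq_fintype_card,
      Fintype.card_sigma] at h
    simp only [Nat.card_eq_fintype_card]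
    omega
  set Φ : G → ∀ ω : MulAction.orbitRel.Quotient G (Fin n),
      MulAction.orbit G (Quotient.out ω) :=
    fun g ω => ⟨(g : Equiv.Perm (Fin n)) (Quotient.out ω), MulAction.mem_orbit _ g⟩ with hΦ
  have hΦinj : Function.Injective Φ := by
    intro g g' h
    have key : ∀ x : Fin n, (((g')⁻¹ * g : G) : Equiv.Perm (Fin n)) x = x := by
      intro x
      have h1 : (g : Equiv.Perm (Fin n))
            (Quotient.out (Quotient.mk'' x : MulAction.orbitRel.Quotient G (Fin n)))
          = (g' : Equiv.Perm (Fin n))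
            (Quotient.out (Quotient.mk'' x : MulAction.orbitRel.Quotient G (Fin n))) :=
        congrArg Subtype.val (congrFun h (Quotient.mk'' x))
      have h2 : (((g')⁻¹ * g : G) : Equiv.Perm (Fin n))
            (Quotient.out (Quotient.mk'' x : MulAction.orbitRel.Quotient G (Fin n)))
          = Quotient.out (Quotient.mk'' x : MulAction.orbitRel.Quotient G (Fin n)) := by
        have hc : (((g')⁻¹ * g : G) : Equiv.Perm (Fin n))
            = ((g' : Equiv.Perm (Fin n)))⁻¹ * (g : Equiv.Perm (Fin n)) := rfl
        rw [hc, Equiv.Perm.mul_apply, h1]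
        simp
      exact fix_orbit G hG _ _ _ h2 (hmem x)
    have : ((g')⁻¹ * g : G) = 1 :=
      Subtype.ext (Equiv.Perm.ext fun x => key x)
    rwa [inv_mul_eq_one, eq_comm] at this
  have hcardle : Nat.card G ≤ ∏ ω : MulAction.orbitRel.Quotient G (Fin n),
      Nat.card (MulAction.orbit G (Quotient.out ω)) := by
    have := Nat.card_le_card_of_injective Φ hΦinj
    rwa [Nat.card_pi] at this
  have hpos : ∀ ω : MulAction.orbitRel.Quotient G (Fin n),
      1 ≤ Nat.card (MulAction.orbit G (Quotient.out ω)) := by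
    intro ω
    haveI : Nonempty (MulAction.orbit G (Quotient.out ω)) :=
      ⟨⟨Quotient.out ω, MulAction.mem_orbit_self _⟩⟩
    exact Nat.card_pos
  have hprod := prod_le_pow Finset.univ
    (fun ω => Nat.card (MulAction.orbit G (Quotient.out ω))) k
    (fun ω _ => hpos ω) (by rw [hsum, hn])
  refine ⟨hcardle.trans hprod.1, fun hge => ?_⟩
  -- equality case
  have hprodeq : ∏ ω : MulAction.orbitRel.Quotient G (Fin n),
      Nat.card (MulAction.orbit G (Quotient.out ω)) = 3 ^ k :=
    le_antisymm hprod.1 (hge.trans hcardle)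
  have horb3 : ∀ ω : MulAction.orbitRel.Quotient G (Fin n),
      Nat.card (MulAction.orbit G (Quotient.out ω)) = 3 :=
    fun ω => hprod.2 hprodeq ω (Finset.mem_univ _)
  have hcardG : Nat.card G = 3 ^ k :=
    le_antisymm (hcardle.trans hprod.1) hge
  have hΦbij : Function.Bijective Φ :=
    (Nat.bijective_iff_injective_and_card Φ).mpr
      ⟨hΦinj, by rw [Nat.card_pi, hprodeq, hcardG]⟩
  have hΦsurj := hΦbij.2
  have hclass : ∀ (x : Fin n) (ω : MulAction.orbitRel.Quotient G (Fin n)),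
      x ∈ MulAction.orbit G (Quotient.out ω) → Quotient.mk'' x = ω := by
    intro x ω h
    have h2 : (Quotient.mk'' x : MulAction.orbitRel.Quotient G (Fin n))
        = Quotient.mk'' (Quotient.out ω) := Quotient.sound' h
    rwa [Quotient.out_eq'] at h2
  have hΩcard : Fintype.card (MulAction.orbitRel.Quotient G (Fin n)) = k := by
    have h := hsum
    rw [Finset.sum_congr rfl (fun ω _ => horb3 ω), Finset.sum_const,
      Finset.card_univ, smul_eq_mul] at h
    omega
  -- construct a 3-cycle for each orbit
  have key : ∀ ω₀ : MulAction.orbitRel.Quotient G (Fin n),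
      ∃ σ : Equiv.Perm (Fin n), σ ∈ G ∧ σ.IsCycle ∧
        σ.support = Set.toFinset (MulAction.orbit G (Quotient.out ω₀)) := by
    intro ω₀
    have hnt : Nontrivial (MulAction.orbit G (Quotient.out ω₀)) := by
      apply Finite.one_lt_card_iff_nontrivial.mp
      rw [horb3]; norm_num
    obtain ⟨y, hy⟩ := exists_ne (⟨Quotient.out ω₀, MulAction.mem_orbit_self _⟩ :
      MulAction.orbit G (Quotient.out ω₀))
    obtain ⟨g, hg⟩ := hΦsurj (Function.update
      (fun ω => ⟨Quotient.out ω, MulAction.mem_orbit_self _⟩) ω₀ y)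
    have hg0 : (g : Equiv.Perm (Fin n)) (Quotient.out ω₀) = (y : Fin n) := by
      have := congrFun hg ω₀
      rw [hΦ] at this
      simpa [Function.update_self] using congrArg Subtype.val this
    have hgne : ∀ ω, ω ≠ ω₀ →
        (g : Equiv.Perm (Fin n)) (Quotient.out ω) = Quotient.out ω := by
      intro ω hω
      have := congrFun hg ω
      rw [hΦ] at this
      simpa [Function.update_of_ne hω] using congrArg Subtype.val this
    have hyne : (y : Fin n) ≠ Quotient.out ω₀ := by
      intro h
      exact hy (Subtype.ext h)
    have hsupp : (g : Equiv.Perm (Fin n)).support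
        = Set.toFinset (MulAction.orbit G (Quotient.out ω₀)) := by
      ext x
      simp only [Equiv.Perm.mem_support, Set.mem_toFinset]
      constructor
      · intro hx
        by_contra hxo
        apply hx
        have hne : (Quotient.mk'' x : MulAction.orbitRel.Quotient G (Fin n)) ≠ ω₀ := by
          intro h
          apply hxo
          have := hmem x
          rw [h] at this
          exact this
        exact fix_orbit G hG g _ _ (hgne _ hne) (hmem x)
      · intro hxo hgx
        have h1 : Quotient.out ω₀ ∈ MulAction.orbit G x := by
          rw [MulAction.orbit_eq_iff.mpr hxo]
          exact MulAction.mem_orbit_self _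
        have := fix_orbit G hG g x _ hgx h1
        rw [hg0] at this
        exact hyne this
    have hcard : (g : Equiv.Perm (Fin n)).support.card = 3 := by
      rw [hsupp, Set.toFinset_card, ← Nat.card_eq_fintype_card, horb3]
    have hne1 : (g : Equiv.Perm (Fin n)) ≠ 1 := by
      intro h
      rw [h] at hcard
      simp at hcard
    have hcyc : (g : Equiv.Perm (Fin n)).IsCycle := by
      rw [← Equiv.Perm.card_cycleType_eq_one]
      have hsum2 := Equiv.Perm.sum_cycleType (g : Equiv.Perm (Fin n))
      rw [hcard] at hsum2
      have h2 : ∀ a ∈ (g : Equiv.Perm (Fin n)).cycleType, 2 ≤ a :=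
        fun a ha => Equiv.Perm.two_le_of_mem_cycleType ha
      have hcne : Multiset.card (g : Equiv.Perm (Fin n)).cycleType ≠ 0 := by
        rw [Ne, Equiv.Perm.card_cycleType_eq_zero]
        exact hne1
      have hle := Multiset.card_nsmul_le_sum h2
      rw [hsum2] at hle
      simp only [smul_eq_mul] at hle
      omega
    exact ⟨g, g.2, hcyc, hsupp⟩
  choose σ hσG hσcyc hσsupp using key
  -- organizing disjoint cycles
  have hsuppmem : ∀ (x : Fin n) (ω), x ∈ (σ ω).support ↔
      x ∈ MulAction.orbit G (Quotient.out ω) := by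
    intro x ω
    rw [hσsupp, Set.mem_toFinset]
  have hσinj : Function.Injective σ := by
    intro ω ω' h
    have h1 : Quotient.out ω ∈ (σ ω').support := by
      rw [← h, hsuppmem]
      exact MulAction.mem_orbit_self _
    rw [hsuppmem] at h1
    have := hclass _ _ h1
    rwa [Quotient.out_eq'] at this
  have hdisj : ∀ ω ω', ω ≠ ω' → Equiv.Perm.Disjoint (σ ω) (σ ω') := by
    intro ω ω' hne
    rw [Equiv.Perm.disjoint_iff_disjoint_support, Finset.disjoint_left]
    intro x hx hx'
    rw [hsuppmem] at hx hx'
    exact hne ((hclass x ω hx).symm.trans (hclass x ω' hx'))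
  have hsuppcard : ∀ ω, (σ ω).support.card = 3 := by
    intro ω
    rw [hσsupp, Set.toFinset_card, ← Nat.card_eq_fintype_card, horb3]
  set S : Finset (Equiv.Perm (Fin n)) := Finset.image σ Finset.univ with hS
  have hSdisj : (S : Set (Equiv.Perm (Fin n))).Pairwise Equiv.Perm.Disjoint := by
    intro a ha b hb hab
    simp only [hS, Finset.coe_image, Set.mem_image, Finset.coe_univ, Set.mem_univ,
      true_and] at ha hb
    obtain ⟨ω, rfl⟩ := ha
    obtain ⟨ω', rfl⟩ := hb
    exact hdisj ω ω' (fun h => hab (h ▸ rfl))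
  have hScard : S.card = k := by
    rw [hS, Finset.card_image_of_injective _ hσinj, Finset.card_univ, hΩcard]
  set π : Equiv.Perm (Fin n) :=
    S.noncommProd id (hSdisj.mono' fun _ _ h => h.commute) with hπ
  have hπG : π ∈ G := Subgroup.noncommProd_mem _ _ (by
    intro c hc
    simp only [hS, Finset.mem_image] at hc
    obtain ⟨ω, _, rfl⟩ := hc
    exact hσG ω)
  have hfac : π.cycleFactorsFinset = S := by
    rw [Equiv.Perm.cycleFactorsFinset_eq_finset]
    refine ⟨?_, hSdisj, rfl⟩
    intro f hf
    simp only [hS, Finset.mem_image] at hf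
    obtain ⟨ω, _, rfl⟩ := hf
    exact hσcyc ω
  have hct : π.cycleType = Multiset.replicate k 3 := by
    rw [Equiv.Perm.cycleType_def, hfac]
    apply Multiset.eq_replicate.mpr
    constructor
    · rw [Multiset.card_map]
      exact hScard
    · intro b hb
      obtain ⟨f, hf, rfl⟩ := Multiset.mem_map.mp hb
      have hf' : f ∈ S := hf
      simp only [hS, Finset.mem_image] at hf'
      obtain ⟨ω, _, rfl⟩ := hf'
      exact hsuppcard ω
  refine ⟨π, hπG, hct, ?_⟩
  rw [hfac]
  have hle : Subgroup.closure (S : Set (Equiv.Perm (Fin n))) ≤ G := by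
    rw [Subgroup.closure_le]
    intro c hc
    simp only [hS, Finset.coe_image, Set.mem_image] at hc
    obtain ⟨ω, _, rfl⟩ := hc
    exact hσG ω
  have hcomm : ∀ e : MulAction.orbitRel.Quotient G (Fin n) → ZMod 3,
      ((Finset.univ : Finset (MulAction.orbitRel.Quotient G (Fin n))) : Set _).Pairwise
        (Commute on fun ω => σ ω ^ (e ω).val) := by
    intro e ω _ ω' _ hne
    exact ((hdisj ω ω' hne).commute).pow_pow _ _
  set ψ : (MulAction.orbitRel.Quotient G (Fin n) → ZMod 3) → Equiv.Perm (Fin n) :=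
    fun e => Finset.univ.noncommProd (fun ω => σ ω ^ (e ω).val) (hcomm e) with hψ
  have hψmem : ∀ e, ψ e ∈ Subgroup.closure (S : Set (Equiv.Perm (Fin n))) := by
    intro e
    refine Subgroup.noncommProd_mem _ _ (fun ω _ => pow_mem ?_ _)
    exact Subgroup.subset_closure (by simp [hS])
  have happ : ∀ (e) (ω₀ : MulAction.orbitRel.Quotient G (Fin n)),
      ψ e (Quotient.out ω₀) = (σ ω₀ ^ (e ω₀).val) (Quotient.out ω₀) := by
    intro e ω₀
    apply noncommProd_apply_single _ _ _ _ ω₀ (Finset.mem_univ _)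
    intro ω _ hne
    have fixes : ∀ z : Fin n, z ∈ MulAction.orbit G (Quotient.out ω₀) →
        (σ ω ^ (e ω).val) z = z := by
      intro z hz
      apply Equiv.Perm.notMem_support.mp
      intro hzs
      have hzs' := Equiv.Perm.support_pow_le (σ ω) (e ω).val hzs
      rw [hsuppmem] at hzs'
      exact hne (((hclass z ω₀ hz).symm.trans (hclass z ω hzs')).symm)
    constructor
    · exact fixes _ (MulAction.mem_orbit_self _)
    · apply fixes
      have : σ ω₀ ^ (e ω₀).val ∈ G := pow_mem (hσG ω₀) _
      exact MulAction.mem_orbit _ (⟨_, this⟩ : G)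
  have hψinj : Function.Injective ψ := by
    intro e e' h
    funext ω₀
    have h1 : (σ ω₀ ^ (e ω₀).val) (Quotient.out ω₀)
        = (σ ω₀ ^ (e' ω₀).val) (Quotient.out ω₀) := by
      rw [← happ e ω₀, ← happ e' ω₀, h]
    have hu : Quotient.out ω₀ ∈ (σ ω₀).support := by
      rw [hsuppmem]; exact MulAction.mem_orbit_self _
    have hmove : σ ω₀ (Quotient.out ω₀) ≠ Quotient.out ω₀ :=
      Equiv.Perm.mem_support.mp hu
    have ho3 : σ ω₀ ^ 3 = 1 := by
      have := (hσcyc ω₀).orderOf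
      rw [hsuppcard ω₀] at this
      rw [← this]
      exact pow_orderOf_eq_one _
    have hmove2 : σ ω₀ (σ ω₀ (Quotient.out ω₀)) ≠ Quotient.out ω₀ := by
      intro hh
      have h3 : (σ ω₀ ^ 3) (Quotient.out ω₀) = σ ω₀ (Quotient.out ω₀) := by
        have h4 : (σ ω₀ ^ 3) (Quotient.out ω₀)
            = σ ω₀ (σ ω₀ (σ ω₀ (Quotient.out ω₀))) := by
          simp [pow_succ, Equiv.Perm.mul_apply]
        rw [h4, hh]
      rw [ho3] at h3
      simp at h3
      exact hmove h3.symm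
    have := pow_apply_inj (σ ω₀) (Quotient.out ω₀) hmove hmove2
      (ZMod.val_lt (e ω₀)) (ZMod.val_lt (e' ω₀)) h1
    exact ZMod.val_injective 3 this
  have hcard2 : 3 ^ k ≤ Nat.card (Subgroup.closure (S : Set (Equiv.Perm (Fin n)))) := by
    have hinj2 : Function.Injective
        (fun e => (⟨ψ e, hψmem e⟩ :
          Subgroup.closure (S : Set (Equiv.Perm (Fin n))))) := by
      intro e e' h
      exact hψinj (congrArg Subtype.val h)
    have := Nat.card_le_card_of_injective _ hinj2
    rwa [Nat.card_pi, Finset.prod_const, Nat.card_zmod, Finset.card_univ, hΩcard] at this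
  exact subgroup_eq_of_le_of_card_le hle (by rw [hcardG]; exact hcard2)

/-- For `n ≡ 0 (mod 3)`, any two abelian subgroups of `S_n` of maximal order are
conjugate in `S_n`. -/
theorem maximal_abelian_conjugate_symmetric (k n : ℕ) (hn : n = 3 * k)
    (M N : Subgroup (Equiv.Perm (Fin n)))
    (hM : ∀ a b : M, a * b = b * a) (hN : ∀ a b : N, a * b = b * a)
    (hMmax : ∀ A : Subgroup (Equiv.Perm (Fin n)), (∀ a b : A, a * b = b * a) →
      Nat.card A ≤ Nat.card M)
    (hNmax : ∀ A : Subgroup (Equiv.Perm (Fin n)), (∀ a b : A, a * b = b * a) →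
      Nat.card A ≤ Nat.card N) :
    ∃ g : Equiv.Perm (Fin n), Subgroup.map (MulAut.conj g).toMonoidHom M = N := by
  obtain ⟨A, hAcomm, hAcard⟩ := exists_big_abelian k n hn
  have hMge : 3 ^ k ≤ Nat.card M := hAcard ▸ hMmax A hAcomm
  have hNge : 3 ^ k ≤ Nat.card N := hAcard ▸ hNmax A hAcomm
  obtain ⟨πM, hπMG, hMt, hMc⟩ := (abelian_structure k n hn M hM).2 hMge
  obtain ⟨πN, hπNG, hNt, hNc⟩ := (abelian_structure k n hn N hN).2 hNge
  have hconj : IsConj πM πN := Equiv.Perm.isConj_iff_cycleType_eq.mpr (hMt.trans hNt.symm)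
  obtain ⟨c, hc⟩ := isConj_iff.mp hconj
  refine ⟨c, ?_⟩
  rw [← hMc, ← hNc, MonoidHom.map_closure]
  congr 1
  have h1 : πN = ConjAct.toConjAct c • πM := by
    rw [ConjAct.smul_def, ConjAct.ofConjAct_toConjAct, hc]
  rw [h1, Equiv.Perm.cycleFactorsFinset_conj_eq, Finset.coe_smul_finset]
  ext x
  simp only [Set.mem_image, Set.mem_smul_set]
  constructor
  · rintro ⟨y, hy, rfl⟩
    exact ⟨y, hy, by simp [ConjAct.smul_def]⟩
  · rintro ⟨y, hy, rfl⟩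
    exact ⟨y, hy, by simp [ConjAct.smul_def]⟩
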